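/- arXiv:math/0603424 — 2 statements merged into one kernel-verified Lean document; each statement's English description precedes it below -/
import Mathlib

section
/- The function φ₇(p,q) = q²/(1 + p²) − p·arctan(p) satisfies the equation (1 + p²)φ_pp + 2pq·φ_pq + (1 + q²)φ_qq = 0 for all real p, q. -/
noncomputable def pd₁ (f : ℝ → ℝ → ℝ) : ℝ → ℝ → ℝ := fun p q => deriv (fun x => f x q) p
noncomputable def pd₂ (f : ℝ → ℝ → ℝ) : ℝ → ℝ → ℝ := fun p q => deriv (fun y => f p y) q

private lemma hne (a : ℝ) : (1 : ℝ) + a ^ 2 ≠ 0 := by positivity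

private lemma hd (a : ℝ) : HasDerivAt (fun x : ℝ => 1 + x ^ 2) (2 * a) a := by
  simpa using (hasDerivAt_pow 2 a).const_add 1

private lemma pd2_phi (p q : ℝ) :
    pd₂ (fun a b => b ^ 2 / (1 + a ^ 2) - a * Real.arctan a) p q = 2 * q / (1 + p ^ 2) := by
  have h : HasDerivAt (fun y : ℝ => y ^ 2 / (1 + p ^ 2) - p * Real.arctan p)
      (2 * q / (1 + p ^ 2)) q := by
    simpa using ((hasDerivAt_pow 2 q).div_const (1 + p ^ 2)).sub_const (p * Real.arctan p)
  exact h.deriv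

private lemma pd1_phi (p q : ℝ) :
    pd₁ (fun a b => b ^ 2 / (1 + a ^ 2) - a * Real.arctan a) p q
      = -(2 * p) * q ^ 2 / (1 + p ^ 2) ^ 2 - (Real.arctan p + p / (1 + p ^ 2)) := by
  have h1 : HasDerivAt (fun x : ℝ => q ^ 2 / (1 + x ^ 2))
      ((0 * (1 + p ^ 2) - q ^ 2 * (2 * p)) / (1 + p ^ 2) ^ 2) p :=
    (hasDerivAt_const p (q ^ 2)).div (hd p) (hne p)
  have h2 : HasDerivAt (fun x : ℝ => x * Real.arctan x)
      (1 * Real.arctan p + p * (1 / (1 + p ^ 2))) p :=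
    (hasDerivAt_id p).mul (Real.hasDerivAt_arctan p)
  have h : deriv (fun x : ℝ => q ^ 2 / (1 + x ^ 2) - x * Real.arctan x) p = _ :=
    (h1.sub h2).deriv
  rw [pd₁]
  rw [h]
  have hp := hne p
  field_simp
  ring

private lemma pd1_pd1 (p q : ℝ) :
    pd₁ (pd₁ (fun a b => b ^ 2 / (1 + a ^ 2) - a * Real.arctan a)) p q
      = (6 * p ^ 2 - 2) * q ^ 2 / (1 + p ^ 2) ^ 3
        - (1 / (1 + p ^ 2) + (1 - p ^ 2) / (1 + p ^ 2) ^ 2) := by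
  have hfun : (fun x : ℝ => pd₁ (fun a b => b ^ 2 / (1 + a ^ 2) - a * Real.arctan a) x q)
      = fun x : ℝ => -(2 * x) * q ^ 2 / (1 + x ^ 2) ^ 2 - (Real.arctan x + x / (1 + x ^ 2)) := by
    funext x; exact pd1_phi x q
  show deriv (fun x : ℝ => pd₁ (fun a b => b ^ 2 / (1 + a ^ 2) - a * Real.arctan a) x q) p = _
  rw [hfun]
  have hden : HasDerivAt (fun x : ℝ => (1 + x ^ 2) ^ 2)
      (2 * (1 + p ^ 2) ^ 1 * (2 * p)) p := (hd p).pow 2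
  have hnum : HasDerivAt (fun x : ℝ => -(2 * x) * q ^ 2) (-(2 : ℝ) * q ^ 2) p := by
    have := ((hasDerivAt_id p).const_mul (2 : ℝ)).neg.mul_const (q ^ 2)
    simpa using this
  have h1 : HasDerivAt (fun x : ℝ => -(2 * x) * q ^ 2 / (1 + x ^ 2) ^ 2)
      ((-(2 : ℝ) * q ^ 2 * (1 + p ^ 2) ^ 2 -
          -(2 * p) * q ^ 2 * (2 * (1 + p ^ 2) ^ 1 * (2 * p))) / ((1 + p ^ 2) ^ 2) ^ 2) p :=
    hnum.div hden (pow_ne_zero 2 (hne p))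
  have h2 : HasDerivAt (fun x : ℝ => x / (1 + x ^ 2))
      ((1 * (1 + p ^ 2) - p * (2 * p)) / (1 + p ^ 2) ^ 2) p :=
    (hasDerivAt_id p).div (hd p) (hne p)
  have h3 : HasDerivAt (fun x : ℝ => Real.arctan x + x / (1 + x ^ 2))
      (1 / (1 + p ^ 2) + (1 * (1 + p ^ 2) - p * (2 * p)) / (1 + p ^ 2) ^ 2) p :=
    (Real.hasDerivAt_arctan p).add h2
  have h : deriv (fun x : ℝ => -(2 * x) * q ^ 2 / (1 + x ^ 2) ^ 2 - (Real.arctan x + x / (1 + x ^ 2))) p = _ :=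
    (h1.sub h3).deriv
  rw [h]
  field_simp
  ring

private lemma pd1_pd2 (p q : ℝ) :
    pd₁ (pd₂ (fun a b => b ^ 2 / (1 + a ^ 2) - a * Real.arctan a)) p q
      = -(4 * p * q) / (1 + p ^ 2) ^ 2 := by
  have hfun : (fun x : ℝ => pd₂ (fun a b => b ^ 2 / (1 + a ^ 2) - a * Real.arctan a) x q)
      = fun x : ℝ => 2 * q / (1 + x ^ 2) := by
    funext x; exact pd2_phi x q
  show deriv (fun x : ℝ => pd₂ (fun a b => b ^ 2 / (1 + a ^ 2) - a * Real.arctan a) x q) p = _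
  rw [hfun]
  have h : HasDerivAt (fun x : ℝ => 2 * q / (1 + x ^ 2))
      ((0 * (1 + p ^ 2) - 2 * q * (2 * p)) / (1 + p ^ 2) ^ 2) p :=
    (hasDerivAt_const p (2 * q)).div (hd p) (hne p)
  rw [h.deriv]
  field_simp
  ring

private lemma pd2_pd2 (p q : ℝ) :
    pd₂ (pd₂ (fun a b => b ^ 2 / (1 + a ^ 2) - a * Real.arctan a)) p q
      = 2 / (1 + p ^ 2) := by
  have hfun : (fun y : ℝ => pd₂ (fun a b => b ^ 2 / (1 + a ^ 2) - a * Real.arctan a) p y)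
      = fun y : ℝ => 2 * y / (1 + p ^ 2) := by
    funext y; exact pd2_phi p y
  show deriv (fun y : ℝ => pd₂ (fun a b => b ^ 2 / (1 + a ^ 2) - a * Real.arctan a) p y) q = _
  rw [hfun]
  have h : HasDerivAt (fun y : ℝ => 2 * y / (1 + p ^ 2)) (2 / (1 + p ^ 2)) q := by
    simpa using (((hasDerivAt_id q).const_mul (2 : ℝ)).div_const (1 + p ^ 2))
  exact h.deriv

theorem phi_solves_legendre_eq :
    ∀ p q : ℝ,
      (1 + p ^ 2) * pd₁ (pd₁ (fun a b => b ^ 2 / (1 + a ^ 2) - a * Real.arctan a)) p q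
        + 2 * p * q * pd₁ (pd₂ (fun a b => b ^ 2 / (1 + a ^ 2) - a * Real.arctan a)) p q
        + (1 + q ^ 2) * pd₂ (pd₂ (fun a b => b ^ 2 / (1 + a ^ 2) - a * Real.arctan a)) p q = 0 := by
  intro p q
  rw [pd1_pd1, pd1_pd2, pd2_pd2]
  have := hne p
  field_simp
  ring
end

section
/- If φ(p,q) is a sufficiently smooth solution of (1 + p²)φ_pp + 2pq·φ_pq + (1 + q²)φ_qq = 0 on ℝ², then ψ(p,q) = −p·φ + (1 + p²)·φ_p + pq·φ_q is also a solution of the same equation. -/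
namespace RecursionAux

def uc (f : ℝ → ℝ → ℝ) : ℝ × ℝ → ℝ := fun z => f z.1 z.2

lemma slice1 {f : ℝ → ℝ → ℝ} {p q : ℝ} (hf : DifferentiableAt ℝ (uc f) (p, q)) :
    HasDerivAt (fun x => f x q) (fderiv ℝ (uc f) (p, q) (1, 0)) p := by
  have h1 : HasFDerivAt (fun x : ℝ => ((x, q) : ℝ × ℝ))
      ((ContinuousLinearMap.id ℝ ℝ).prod 0) p :=
    (hasFDerivAt_id p).prodMk (hasFDerivAt_const q p)
  have h2 := hf.hasFDerivAt.comp p h1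
  simpa [uc, Function.comp_def] using h2.hasDerivAt

lemma slice2 {f : ℝ → ℝ → ℝ} {p q : ℝ} (hf : DifferentiableAt ℝ (uc f) (p, q)) :
    HasDerivAt (fun y => f p y) (fderiv ℝ (uc f) (p, q) (0, 1)) q := by
  have h1 : HasFDerivAt (fun y : ℝ => ((p, y) : ℝ × ℝ))
      ((0 : ℝ →L[ℝ] ℝ).prod (ContinuousLinearMap.id ℝ ℝ)) q :=
    (hasFDerivAt_const p q).prodMk (hasFDerivAt_id q)
  have h2 := hf.hasFDerivAt.comp q h1
  simpa [uc, Function.comp_def] using h2.hasDerivAt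

lemma pd1_eq {f : ℝ → ℝ → ℝ} {p q : ℝ} (hf : DifferentiableAt ℝ (uc f) (p, q)) :
    pd₁ f p q = fderiv ℝ (uc f) (p, q) (1, 0) := (slice1 hf).deriv

lemma pd2_eq {f : ℝ → ℝ → ℝ} {p q : ℝ} (hf : DifferentiableAt ℝ (uc f) (p, q)) :
    pd₂ f p q = fderiv ℝ (uc f) (p, q) (0, 1) := (slice2 hf).deriv

lemma hd1 {f : ℝ → ℝ → ℝ} (hf : Differentiable ℝ (uc f)) (p q : ℝ) :
    HasDerivAt (fun x => f x q) (pd₁ f p q) p := by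
  rw [pd1_eq (hf (p, q))]; exact slice1 (hf (p, q))

lemma hd2 {f : ℝ → ℝ → ℝ} (hf : Differentiable ℝ (uc f)) (p q : ℝ) :
    HasDerivAt (fun y => f p y) (pd₂ f p q) q := by
  rw [pd2_eq (hf (p, q))]; exact slice2 (hf (p, q))

lemma uc_pd1_eq {f : ℝ → ℝ → ℝ} (hf : Differentiable ℝ (uc f)) :
    uc (pd₁ f) = fun z => fderiv ℝ (uc f) z (1, 0) := by
  funext z
  exact pd1_eq (hf (z.1, z.2))

lemma uc_pd2_eq {f : ℝ → ℝ → ℝ} (hf : Differentiable ℝ (uc f)) :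
    uc (pd₂ f) = fun z => fderiv ℝ (uc f) z (0, 1) := by
  funext z
  exact pd2_eq (hf (z.1, z.2))

lemma contDiff_uc_pd1 {f : ℝ → ℝ → ℝ} {m n : WithTop ℕ∞} (hf : ContDiff ℝ n (uc f))
    (h : m + 1 ≤ n) : ContDiff ℝ m (uc (pd₁ f)) := by
  have hdiff : Differentiable ℝ (uc f) := hf.differentiable (by rintro rfl; exact absurd h (by simp))
  rw [uc_pd1_eq hdiff]
  exact (hf.fderiv_right h).clm_apply contDiff_const

lemma contDiff_uc_pd2 {f : ℝ → ℝ → ℝ} {m n : WithTop ℕ∞} (hf : ContDiff ℝ n (uc f))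
    (h : m + 1 ≤ n) : ContDiff ℝ m (uc (pd₂ f)) := by
  have hdiff : Differentiable ℝ (uc f) := hf.differentiable (by rintro rfl; exact absurd h (by simp))
  rw [uc_pd2_eq hdiff]
  exact (hf.fderiv_right h).clm_apply contDiff_const

lemma clairaut {f : ℝ → ℝ → ℝ} (hf : ContDiff ℝ 2 (uc f)) :
    pd₂ (pd₁ f) = pd₁ (pd₂ f) := by
  funext p q
  have hdiff : Differentiable ℝ (uc f) := hf.differentiable two_ne_zero
  have hC1 : ContDiff ℝ 1 (fderiv ℝ (uc f)) := hf.fderiv_right (by norm_num)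
  have hDf : Differentiable ℝ (fderiv ℝ (uc f)) := hC1.differentiable one_ne_zero
  have h1 : DifferentiableAt ℝ (uc (pd₁ f)) (p, q) := by
    rw [uc_pd1_eq hdiff]
    exact (hDf (p, q)).clm_apply (differentiableAt_const _)
  have h2 : DifferentiableAt ℝ (uc (pd₂ f)) (p, q) := by
    rw [uc_pd2_eq hdiff]
    exact (hDf (p, q)).clm_apply (differentiableAt_const _)
  have e1 : pd₂ (pd₁ f) p q = fderiv ℝ (fderiv ℝ (uc f)) (p, q) (0, 1) (1, 0) := by
    rw [pd2_eq h1, uc_pd1_eq hdiff]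
    have H : HasFDerivAt (fun z => fderiv ℝ (uc f) z (1, 0))
        (((fderiv ℝ (uc f) (p, q)).comp 0)
          + (fderiv ℝ (fderiv ℝ (uc f)) (p, q)).flip ((1 : ℝ), (0 : ℝ)))
        (p, q) :=
      (hDf (p, q)).hasFDerivAt.clm_apply (hasFDerivAt_const _ _)
    rw [H.fderiv]
    simp
  have e2 : pd₁ (pd₂ f) p q = fderiv ℝ (fderiv ℝ (uc f)) (p, q) (1, 0) (0, 1) := by
    rw [pd1_eq h2, uc_pd2_eq hdiff]
    have H : HasFDerivAt (fun z => fderiv ℝ (uc f) z (0, 1))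
        (((fderiv ℝ (uc f) (p, q)).comp 0)
          + (fderiv ℝ (fderiv ℝ (uc f)) (p, q)).flip ((0 : ℝ), (1 : ℝ)))
        (p, q) :=
      (hDf (p, q)).hasFDerivAt.clm_apply (hasFDerivAt_const _ _)
    rw [H.fderiv]
    simp
  rw [e1, e2]
  exact (hf.contDiffAt.isSymmSndFDerivAt (by norm_num)) _ _

end RecursionAux

open RecursionAux in
theorem recursion_preserves_solutions
    (φ : ℝ → ℝ → ℝ) (hφ : ContDiff ℝ 3 (fun z : ℝ × ℝ => φ z.1 z.2))
    (hsol : ∀ p q : ℝ,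
      (1 + p ^ 2) * pd₁ (pd₁ φ) p q + 2 * p * q * pd₁ (pd₂ φ) p q
        + (1 + q ^ 2) * pd₂ (pd₂ φ) p q = 0) :
    ∀ p q : ℝ,
      (1 + p ^ 2) * pd₁ (pd₁ (fun p q => -p * φ p q + (1 + p ^ 2) * pd₁ φ p q + p * q * pd₂ φ p q)) p q
        + 2 * p * q * pd₁ (pd₂ (fun p q => -p * φ p q + (1 + p ^ 2) * pd₁ φ p q + p * q * pd₂ φ p q)) p q
        + (1 + q ^ 2) * pd₂ (pd₂ (fun p q => -p * φ p q + (1 + p ^ 2) * pd₁ φ p q + p * q * pd₂ φ p q)) p q = 0 := by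
  intro p q
  have h3 : ContDiff ℝ 3 (uc φ) := hφ
  have h2 : ContDiff ℝ 2 (uc φ) := h3.of_le (by norm_num)
  have hφd : Differentiable ℝ (uc φ) := h3.differentiable (by norm_num)
  -- second-order smoothness
  have hA2 : ContDiff ℝ 2 (uc (pd₁ φ)) := contDiff_uc_pd1 h3 (by norm_num)
  have hB2 : ContDiff ℝ 2 (uc (pd₂ φ)) := contDiff_uc_pd2 h3 (by norm_num)
  have hAd : Differentiable ℝ (uc (pd₁ φ)) := hA2.differentiable (by norm_num)
  have hBd : Differentiable ℝ (uc (pd₂ φ)) := hB2.differentiable (by norm_num)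
  -- first-order smoothness of second partials
  have hA1d : Differentiable ℝ (uc (pd₁ (pd₁ φ))) :=
    (contDiff_uc_pd1 hA2 (by norm_num) : ContDiff ℝ 1 _).differentiable one_ne_zero
  have hA2d : Differentiable ℝ (uc (pd₂ (pd₁ φ))) :=
    (contDiff_uc_pd2 hA2 (by norm_num) : ContDiff ℝ 1 _).differentiable one_ne_zero
  have hB1d : Differentiable ℝ (uc (pd₁ (pd₂ φ))) :=
    (contDiff_uc_pd1 hB2 (by norm_num) : ContDiff ℝ 1 _).differentiable one_ne_zero
  have hB2d : Differentiable ℝ (uc (pd₂ (pd₂ φ))) :=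
    (contDiff_uc_pd2 hB2 (by norm_num) : ContDiff ℝ 1 _).differentiable one_ne_zero
  -- Clairaut
  have hcl : pd₂ (pd₁ φ) = pd₁ (pd₂ φ) := clairaut h2
  have hclA : pd₂ (pd₁ (pd₁ φ)) = pd₁ (pd₂ (pd₁ φ)) := clairaut hA2
  have hclB : pd₂ (pd₁ (pd₂ φ)) = pd₁ (pd₂ (pd₂ φ)) := clairaut hB2
  set ψ : ℝ → ℝ → ℝ :=
    fun a b => -a * φ a b + (1 + a ^ 2) * pd₁ φ a b + a * b * pd₂ φ a b with hψdef
  -- first partials of ψ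
  have hψ1 : ∀ x y : ℝ, pd₁ ψ x y
      = -(φ x y) + x * pd₁ φ x y + (1 + x ^ 2) * pd₁ (pd₁ φ) x y
        + y * pd₂ φ x y + x * y * pd₁ (pd₂ φ) x y := by
    intro x y
    have H : HasDerivAt (fun t : ℝ => -t * φ t y + (1 + t ^ 2) * pd₁ φ t y + t * y * pd₂ φ t y)
        (((-1) * φ x y + (-x) * pd₁ φ x y)
          + ((2 * x ^ (2 - 1)) * pd₁ φ x y + (1 + x ^ 2) * pd₁ (pd₁ φ) x y)
          + ((1 * y) * pd₂ φ x y + (x * y) * pd₁ (pd₂ φ) x y)) x :=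
      (((hasDerivAt_id x).neg.mul (hd1 hφd x y)).add
        (((hasDerivAt_pow 2 x).const_add 1).mul (hd1 hAd x y))).add
        (((hasDerivAt_id x).mul_const y).mul (hd1 hBd x y))
    rw [hψdef]
    show deriv (fun t : ℝ => -t * φ t y + (1 + t ^ 2) * pd₁ φ t y + t * y * pd₂ φ t y) x = _
    rw [H.deriv]; ring
  have hψ2 : ∀ x y : ℝ, pd₂ ψ x y
      = (1 + x ^ 2) * pd₂ (pd₁ φ) x y + x * y * pd₂ (pd₂ φ) x y := by
    intro x y
    have H : HasDerivAt (fun t : ℝ => -x * φ x t + (1 + x ^ 2) * pd₁ φ x t + x * t * pd₂ φ x t)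
        ((-x * pd₂ φ x y)
          + ((1 + x ^ 2) * pd₂ (pd₁ φ) x y)
          + ((x * 1) * pd₂ φ x y + (x * y) * pd₂ (pd₂ φ) x y)) y :=
      (((hd2 hφd x y).const_mul (-x)).add
        ((hd2 hAd x y).const_mul (1 + x ^ 2))).add
        (((hasDerivAt_id y).const_mul x).mul (hd2 hBd x y))
    rw [hψdef]
    show deriv (fun t : ℝ => -x * φ x t + (1 + x ^ 2) * pd₁ φ x t + x * t * pd₂ φ x t) y = _
    rw [H.deriv]; ring
  -- second partials of ψ
  have hψ11 : pd₁ (pd₁ ψ) p q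
      = 3 * p * pd₁ (pd₁ φ) p q + (1 + p ^ 2) * pd₁ (pd₁ (pd₁ φ)) p q
        + 2 * q * pd₁ (pd₂ φ) p q + p * q * pd₁ (pd₁ (pd₂ φ)) p q := by
    have hfun : (fun x => pd₁ ψ x q)
        = fun x => -(φ x q) + x * pd₁ φ x q + (1 + x ^ 2) * pd₁ (pd₁ φ) x q
            + q * pd₂ φ x q + x * q * pd₁ (pd₂ φ) x q := funext fun x => hψ1 x q
    have H : HasDerivAt (fun x : ℝ => -(φ x q) + x * pd₁ φ x q + (1 + x ^ 2) * pd₁ (pd₁ φ) x q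
          + q * pd₂ φ x q + x * q * pd₁ (pd₂ φ) x q)
        (((((-(pd₁ φ p q))
          + (1 * pd₁ φ p q + p * pd₁ (pd₁ φ) p q))
          + ((2 * p ^ (2 - 1)) * pd₁ (pd₁ φ) p q + (1 + p ^ 2) * pd₁ (pd₁ (pd₁ φ)) p q))
          + (q * pd₁ (pd₂ φ) p q))
          + ((1 * q) * pd₁ (pd₂ φ) p q + (p * q) * pd₁ (pd₁ (pd₂ φ)) p q)) p :=
      (((((hd1 hφd p q).neg.add
        ((hasDerivAt_id p).mul (hd1 hAd p q))).add
        (((hasDerivAt_pow 2 p).const_add 1).mul (hd1 hA1d p q))).add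
        ((hd1 hBd p q).const_mul q)).add
        (((hasDerivAt_id p).mul_const q).mul (hd1 hB1d p q)))
    show deriv (fun x => pd₁ ψ x q) p = _
    rw [hfun, H.deriv]; ring
  have hψ12 : pd₁ (pd₂ ψ) p q
      = 2 * p * pd₂ (pd₁ φ) p q + (1 + p ^ 2) * pd₁ (pd₂ (pd₁ φ)) p q
        + q * pd₂ (pd₂ φ) p q + p * q * pd₁ (pd₂ (pd₂ φ)) p q := by
    have hfun : (fun x => pd₂ ψ x q)
        = fun x => (1 + x ^ 2) * pd₂ (pd₁ φ) x q + x * q * pd₂ (pd₂ φ) x q :=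
      funext fun x => hψ2 x q
    have H : HasDerivAt (fun x : ℝ => (1 + x ^ 2) * pd₂ (pd₁ φ) x q + x * q * pd₂ (pd₂ φ) x q)
        (((2 * p ^ (2 - 1)) * pd₂ (pd₁ φ) p q + (1 + p ^ 2) * pd₁ (pd₂ (pd₁ φ)) p q)
          + ((1 * q) * pd₂ (pd₂ φ) p q + (p * q) * pd₁ (pd₂ (pd₂ φ)) p q)) p :=
      ((((hasDerivAt_pow 2 p).const_add 1).mul (hd1 hA2d p q)).add
        (((hasDerivAt_id p).mul_const q).mul (hd1 hB2d p q)))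
    show deriv (fun x => pd₂ ψ x q) p = _
    rw [hfun, H.deriv]; ring
  have hψ22 : pd₂ (pd₂ ψ) p q
      = (1 + p ^ 2) * pd₂ (pd₂ (pd₁ φ)) p q + p * pd₂ (pd₂ φ) p q
        + p * q * pd₂ (pd₂ (pd₂ φ)) p q := by
    have hfun : (fun y => pd₂ ψ p y)
        = fun y => (1 + p ^ 2) * pd₂ (pd₁ φ) p y + p * y * pd₂ (pd₂ φ) p y :=
      funext fun y => hψ2 p y
    have H : HasDerivAt (fun y : ℝ => (1 + p ^ 2) * pd₂ (pd₁ φ) p y + p * y * pd₂ (pd₂ φ) p y)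
        (((1 + p ^ 2) * pd₂ (pd₂ (pd₁ φ)) p q)
          + ((p * 1) * pd₂ (pd₂ φ) p q + (p * q) * pd₂ (pd₂ (pd₂ φ)) p q)) q :=
      (((hd2 hA2d p q).const_mul (1 + p ^ 2)).add
        (((hasDerivAt_id q).const_mul p).mul (hd2 hB2d p q)))
    show deriv (fun y => pd₂ ψ p y) q = _
    rw [hfun, H.deriv]; ring
  -- derivative of the solution equation in p
  have hEp : 2 * p * pd₁ (pd₁ φ) p q + (1 + p ^ 2) * pd₁ (pd₁ (pd₁ φ)) p q
      + 2 * q * pd₁ (pd₂ φ) p q + 2 * p * q * pd₁ (pd₁ (pd₂ φ)) p q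
      + (1 + q ^ 2) * pd₁ (pd₂ (pd₂ φ)) p q = 0 := by
    have H : HasDerivAt (fun x : ℝ => (1 + x ^ 2) * pd₁ (pd₁ φ) x q
          + 2 * x * q * pd₁ (pd₂ φ) x q + (1 + q ^ 2) * pd₂ (pd₂ φ) x q)
        ((((2 * p ^ (2 - 1)) * pd₁ (pd₁ φ) p q + (1 + p ^ 2) * pd₁ (pd₁ (pd₁ φ)) p q)
          + ((2 * 1 * q) * pd₁ (pd₂ φ) p q + (2 * p * q) * pd₁ (pd₁ (pd₂ φ)) p q))
          + ((1 + q ^ 2) * pd₁ (pd₂ (pd₂ φ)) p q)) p :=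
      (((((hasDerivAt_pow 2 p).const_add 1).mul (hd1 hA1d p q)).add
        ((((hasDerivAt_id p).const_mul 2).mul_const q).mul (hd1 hB1d p q))).add
        ((hd1 hB2d p q).const_mul (1 + q ^ 2)))
    have hfun : (fun x : ℝ => (1 + x ^ 2) * pd₁ (pd₁ φ) x q
        + 2 * x * q * pd₁ (pd₂ φ) x q + (1 + q ^ 2) * pd₂ (pd₂ φ) x q) = fun _ => (0 : ℝ) :=
      funext fun x => hsol x q
    rw [hfun] at H
    have h0 := H.unique (hasDerivAt_const p 0)
    linear_combination h0
  -- derivative of the solution equation in q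
  have hEq : (1 + p ^ 2) * pd₂ (pd₁ (pd₁ φ)) p q + 2 * p * pd₁ (pd₂ φ) p q
      + 2 * p * q * pd₂ (pd₁ (pd₂ φ)) p q + 2 * q * pd₂ (pd₂ φ) p q
      + (1 + q ^ 2) * pd₂ (pd₂ (pd₂ φ)) p q = 0 := by
    have H : HasDerivAt (fun y : ℝ => (1 + p ^ 2) * pd₁ (pd₁ φ) p y
          + 2 * p * y * pd₁ (pd₂ φ) p y + (1 + y ^ 2) * pd₂ (pd₂ φ) p y)
        ((((1 + p ^ 2) * pd₂ (pd₁ (pd₁ φ)) p q)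
          + ((2 * p * 1) * pd₁ (pd₂ φ) p q + (2 * p * q) * pd₂ (pd₁ (pd₂ φ)) p q))
          + ((2 * q ^ (2 - 1)) * pd₂ (pd₂ φ) p q + (1 + q ^ 2) * pd₂ (pd₂ (pd₂ φ)) p q)) q :=
      ((((hd2 hA1d p q).const_mul (1 + p ^ 2)).add
        (((hasDerivAt_id q).const_mul (2 * p)).mul (hd2 hB1d p q))).add
        ((((hasDerivAt_pow 2 q).const_add 1)).mul (hd2 hB2d p q)))
    have hfun : (fun y : ℝ => (1 + p ^ 2) * pd₁ (pd₁ φ) p y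
        + 2 * p * y * pd₁ (pd₂ φ) p y + (1 + y ^ 2) * pd₂ (pd₂ φ) p y) = fun _ => (0 : ℝ) :=
      funext fun y => hsol p y
    rw [hfun] at H
    have h0 := H.unique (hasDerivAt_const q 0)
    linear_combination h0
  -- normalize mixed partials and conclude
  simp only [hclA, hclB, hcl] at hψ11 hψ12 hψ22 hEp hEq
  rw [hψ11, hψ12, hψ22]
  linear_combination p * hsol p q + (1 + p ^ 2) * hEp + p * q * hEq
end
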